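/- Let N_1, ..., N_d be commuting bounded normal operators on a complex Hilbert space H and let λ ∈ ℂ^d. If there do NOT exist bounded operators S_1, ..., S_d with Σ_j S_j (N_j - λ_j) = I, then 0 belongs to the spectrum of the self-adjoint operator T = Σ_j (N_j - λ_j)*(N_j - λ_j), and consequently there exists a sequence of unit vectors x_n with ⟨T x_n, x_n⟩ → 0. -/

import Mathlib

open Filter
open scoped InnerProductSpace

-- if T is a unit, we get left inverses
lemma aux_unit {H : Type*} [NormedAddCommGroup H] [InnerProductSpace ℂ H] [CompleteSpace H]
    {d : ℕ} (M : Fin d → H →L[ℂ] H)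
    (h : IsUnit (∑ j, star (M j) * M j)) :
    ∃ S : Fin d → H →L[ℂ] H, ∑ j, S j * M j = 1 := by
  obtain ⟨u, hu⟩ := h
  refine ⟨fun j => ↑u⁻¹ * star (M j), ?_⟩
  have : ∑ j, (↑u⁻¹ * star (M j)) * M j = ↑u⁻¹ * ∑ j, star (M j) * M j := by
    rw [Finset.mul_sum]; simp [mul_assoc]
  rw [this, ← hu, u.inv_mul]

lemma aux_inner {H : Type*} [NormedAddCommGroup H] [InnerProductSpace ℂ H] [CompleteSpace H]
    {d : ℕ} (M : Fin d → H →L[ℂ] H) (x : H) :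
    ⟪(∑ j, star (M j) * M j) x, x⟫_ℂ = ((∑ j, ‖M j x‖ ^ 2 : ℝ) : ℂ) := by
  rw [ContinuousLinearMap.sum_apply, sum_inner]
  push_cast
  refine Finset.sum_congr rfl fun j _ => ?_
  rw [Function.comp_apply, ContinuousLinearMap.star_eq_adjoint,
    ContinuousLinearMap.adjoint_inner_left, inner_self_eq_norm_sq_to_K]
  norm_num

theorem zero_mem_spectrum_of_not_left_invertible
    {H : Type*} [NormedAddCommGroup H] [InnerProductSpace ℂ H] [CompleteSpace H]
    {d : ℕ} (N : Fin d → H →L[ℂ] H)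
    (hcomm : ∀ i j, Commute (N i) (N j))
    (hnormal : ∀ j, IsStarNormal (N j))
    (lam : Fin d → ℂ)
    (hno : ¬ ∃ S : Fin d → H →L[ℂ] H, ∑ j, S j * (N j - lam j • 1) = 1) :
    (0 : ℂ) ∈ spectrum ℂ (∑ j, star (N j - lam j • 1) * (N j - lam j • 1)) ∧
      ∃ x : ℕ → H, (∀ n, ‖x n‖ = 1) ∧
        Tendsto
          (fun n =>
            ⟪(∑ j, star (N j - lam j • 1) * (N j - lam j • 1)) (x n), x n⟫_ℂ)
          atTop (nhds 0) := by
  set M : Fin d → H →L[ℂ] H := fun j => N j - lam j • 1 with hM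
  set T : H →L[ℂ] H := ∑ j, star (M j) * M j with hT
  set q : H → ℝ := fun x => ∑ j, ‖M j x‖ ^ 2 with hq
  have hq_nonneg : ∀ x, 0 ≤ q x := fun x => Finset.sum_nonneg fun j _ => sq_nonneg _
  have hinner : ∀ x, ⟪T x, x⟫_ℂ = ((q x : ℝ) : ℂ) := fun x => aux_inner M x
  have hTnotunit : ¬ IsUnit T := fun h => hno (aux_unit M h)
  -- 0 in spectrum
  have hspec : (0 : ℂ) ∈ spectrum ℂ T := by
    rw [spectrum.mem_iff, map_zero, zero_sub]
    intro h
    exact hTnotunit (by simpa using h.neg)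
  refine ⟨hspec, ?_⟩
  -- for each n, find a unit vector with small quadratic form
  have key : ∀ n : ℕ, ∃ x : H, ‖x‖ = 1 ∧ q x < 1 / (n + 1) := by
    intro n
    by_contra hcon
    push_neg at hcon
    -- then T is bounded below, hence a unit
    set c : NNReal := ⟨1 / (n + 1), by positivity⟩ with hc
    have hcpos : 0 < c := by
      rw [← NNReal.coe_lt_coe, hc]
      show (0:ℝ) < 1 / ((n:ℝ) + 1)
      positivity
    apply hTnotunit
    apply ContinuousLinearMap.isUnit_of_forall_le_norm_inner_map T hcpos
    intro x
    rcases eq_or_ne x 0 with rfl | hx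
    · simp
    · have hxn : ‖x‖ ≠ 0 := norm_ne_zero_iff.mpr hx
      have h1 : ‖(‖x‖ : ℝ)⁻¹ • x‖ = 1 := by
        rw [norm_smul, norm_inv, norm_norm, inv_mul_cancel₀ hxn]
      have h2 := hcon ((‖x‖ : ℝ)⁻¹ • x) h1
      have h3 : q ((‖x‖ : ℝ)⁻¹ • x) = (‖x‖ ^ 2)⁻¹ * q x := by
        simp only [hq, Finset.mul_sum]
        refine Finset.sum_congr rfl fun j _ => ?_
        rw [ContinuousLinearMap.map_smul_of_tower, norm_smul, mul_pow, norm_inv, norm_norm]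
        ring
      rw [h3] at h2
      have h4 : ‖x‖ ^ 2 * (1 / (n + 1)) ≤ q x := by
        rw [le_inv_mul_iff₀ (by positivity : (0:ℝ) < ‖x‖ ^ 2)] at h2
        linarith
      calc ‖x‖ ^ 2 * (c : ℝ) = ‖x‖ ^ 2 * (1 / (n + 1)) := rfl
        _ ≤ q x := h4
        _ = ‖⟪T x, x⟫_ℂ‖ := by
            rw [hinner, Complex.norm_real, Real.norm_of_nonneg (hq_nonneg x)]
  choose x hx1 hx2 using key
  refine ⟨x, hx1, ?_⟩
  have hre : Tendsto (fun n => q (x n)) atTop (nhds 0) := by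
    apply squeeze_zero (fun n => hq_nonneg _) (fun n => (hx2 n).le)
    exact tendsto_one_div_add_atTop_nhds_zero_nat
  have : Tendsto (fun n => ((q (x n) : ℝ) : ℂ)) atTop (nhds 0) := by
    rw [show ((0 : ℂ)) = ((0 : ℝ) : ℂ) by norm_num]
    exact (Complex.continuous_ofReal.tendsto 0).comp hre
  simpa only [hinner] using this
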